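/- For every natural number k ≥ 1, the graph G_k consisting of the disjoint union of k copies of the path P_4 and one isolated vertex (order 4k+1, size 3k) becomes a 2k-regular graph after switching with respect to its 2k leaves; consequently its Seidel matrix is singular and has a ±1 nullspace vector. -/

import Mathlib

open Matrix Finset

def seidelMatrix {n : ℕ} (G : SimpleGraph (Fin n)) [DecidableRel G.Adj] :
    Matrix (Fin n) (Fin n) ℤ :=
  Matrix.of fun i j => if i = j then 0 else if G.Adj i j then -1 else 1

/-- Seidel switching of a graph with respect to a set of vertices `A`. -/
def switchGraph {n : ℕ} (G : SimpleGraph (Fin n)) (A : Finset (Fin n)) :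
    SimpleGraph (Fin n) where
  Adj v w := v ≠ w ∧ (G.Adj v w ↔ ((v ∈ A) ↔ (w ∈ A)))
  symm := ⟨by
    intro v w ⟨h1, h2⟩
    exact ⟨h1.symm, by rw [G.adj_comm]; tauto⟩⟩
  loopless := ⟨fun v h => h.1 rfl⟩

instance {n : ℕ} (G : SimpleGraph (Fin n)) [DecidableRel G.Adj] (A : Finset (Fin n)) :
    DecidableRel (switchGraph G A).Adj :=
  fun v w => inferInstanceAs (Decidable (v ≠ w ∧ (G.Adj v w ↔ ((v ∈ A) ↔ (w ∈ A)))))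

/-- The disjoint union of `k` copies of `P₄` (on vertices `4i,4i+1,4i+2,4i+3` for `i < k`)
together with one isolated vertex (the vertex `4k`), on `4k+1` vertices. -/
def pathsPlusIsolated (k : ℕ) : SimpleGraph (Fin (4 * k + 1)) where
  Adj u v := u.val / 4 = v.val / 4 ∧ (u.val + 1 = v.val ∨ v.val + 1 = u.val)
  symm := ⟨by intro u v ⟨h1, h2⟩; exact ⟨h1.symm, h2.symm⟩⟩
  loopless := ⟨by intro u ⟨h1, h2⟩; omega⟩

instance (k : ℕ) : DecidableRel (pathsPlusIsolated k).Adj :=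
  fun u v => inferInstanceAs
    (Decidable (u.val / 4 = v.val / 4 ∧ (u.val + 1 = v.val ∨ v.val + 1 = u.val)))

/-- The set of leaves (degree-one vertices) of `pathsPlusIsolated k`:
the endpoints of the `k` paths. -/
def pathLeaves (k : ℕ) : Finset (Fin (4 * k + 1)) :=
  Finset.univ.filter fun v => v.val < 4 * k ∧ (v.val % 4 = 0 ∨ v.val % 4 = 3)


section Aux
variable {k : ℕ}

lemma adj_iff (u v : Fin (4*k+1)) : (pathsPlusIsolated k).Adj u v ↔
    (u.val / 4 = v.val / 4 ∧ (u.val + 1 = v.val ∨ v.val + 1 = u.val)) := Iff.rfl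

lemma mem_leaves (v : Fin (4*k+1)) :
    v ∈ pathLeaves k ↔ v.val < 4 * k ∧ (v.val % 4 = 0 ∨ v.val % 4 = 3) := by
  simp [pathLeaves]

lemma card_leaves : (pathLeaves k).card = 2 * k := by
  rw [show 2*k = (Finset.range (2*k)).card by simp]
  apply Finset.card_nbij' (fun v => 2*(v.val/4) + v.val%4/3)
    (fun i => (⟨min (4*(i/2)+3*(i%2)) (4*k), by omega⟩ : Fin (4*k+1)))
  · intro v hv; rw [Finset.mem_coe, mem_leaves] at hv; simp only [Finset.mem_coe, Finset.mem_range]; omega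
  · intro i hi; rw [Finset.mem_coe, mem_leaves]; simp only [Finset.mem_coe, Finset.mem_range] at hi; simp
    rw [Nat.min_eq_left (by omega)]
    rcases Nat.mod_two_eq_zero_or_one i with h2 | h2 <;> omega
  · intro v hv; rw [Finset.mem_coe, mem_leaves] at hv; apply Fin.ext; simp
    rw [Nat.min_eq_left (by omega)]; omega
  · intro i hi; simp only [Finset.mem_coe, Finset.mem_range] at hi; simp
    rw [Nat.min_eq_left (by omega)]; omega


lemma nf_iso (v : Fin (4*k+1)) (h : v.val = 4*k) :
    (pathsPlusIsolated k).neighborFinset v = ∅ := by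
  ext w; simp only [SimpleGraph.mem_neighborFinset, adj_iff, Finset.notMem_empty, iff_false]
  have := w.isLt; omega

lemma nf0 (v : Fin (4*k+1)) (h : v.val % 4 = 0) (h2 : v.val < 4*k) :
    (pathsPlusIsolated k).neighborFinset v = {⟨v.val+1, by omega⟩} := by
  ext w; simp only [SimpleGraph.mem_neighborFinset, adj_iff, Finset.mem_singleton, Fin.ext_iff]
  have := w.isLt; have := v.isLt; omega

lemma nf3 (v : Fin (4*k+1)) (h : v.val % 4 = 3) :
    (pathsPlusIsolated k).neighborFinset v = {⟨v.val-1, by omega⟩} := by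
  ext w; simp only [SimpleGraph.mem_neighborFinset, adj_iff, Finset.mem_singleton, Fin.ext_iff]
  have := w.isLt; have := v.isLt; omega

lemma nf12 (v : Fin (4*k+1)) (h : v.val % 4 = 1 ∨ v.val % 4 = 2) :
    (pathsPlusIsolated k).neighborFinset v =
      {⟨v.val-1, by omega⟩, ⟨v.val+1, by have := v.isLt; omega⟩} := by
  ext w
  simp only [SimpleGraph.mem_neighborFinset, adj_iff, Finset.mem_insert, Finset.mem_singleton,
    Fin.ext_iff]
  have := w.isLt; have := v.isLt; omega


lemma sadj_iff (v w : Fin (4*k+1)) :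
    (switchGraph (pathsPlusIsolated k) (pathLeaves k)).Adj v w ↔
      v ≠ w ∧ ((pathsPlusIsolated k).Adj v w ↔ (v ∈ pathLeaves k ↔ w ∈ pathLeaves k)) :=
  Iff.rfl

lemma snf_iso (v : Fin (4*k+1)) (h : v.val = 4*k) :
    (switchGraph (pathsPlusIsolated k) (pathLeaves k)).neighborFinset v = pathLeaves k := by
  ext w
  simp only [SimpleGraph.mem_neighborFinset, sadj_iff, adj_iff, mem_leaves, ne_eq, Fin.ext_iff]
  have := w.isLt; omega

lemma snf0 (v : Fin (4*k+1)) (h : v.val % 4 = 0) (h2 : v.val < 4*k) :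
    (switchGraph (pathsPlusIsolated k) (pathLeaves k)).neighborFinset v =
      ((pathLeaves k)ᶜ).erase ⟨v.val+1, by omega⟩ := by
  ext w
  simp only [SimpleGraph.mem_neighborFinset, sadj_iff, adj_iff, mem_leaves, ne_eq, Fin.ext_iff,
    Finset.mem_erase, Finset.mem_compl]
  have := w.isLt; omega

lemma snf3 (v : Fin (4*k+1)) (h : v.val % 4 = 3) :
    (switchGraph (pathsPlusIsolated k) (pathLeaves k)).neighborFinset v =
      ((pathLeaves k)ᶜ).erase ⟨v.val-1, by omega⟩ := by
  ext w
  simp only [SimpleGraph.mem_neighborFinset, sadj_iff, adj_iff, mem_leaves, ne_eq, Fin.ext_iff,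
    Finset.mem_erase, Finset.mem_compl]
  have := w.isLt; have := v.isLt; omega

lemma snf1 (v : Fin (4*k+1)) (h : v.val % 4 = 1) :
    (switchGraph (pathsPlusIsolated k) (pathLeaves k)).neighborFinset v =
      insert ⟨v.val+1, by have := v.isLt; omega⟩ ((pathLeaves k).erase ⟨v.val-1, by omega⟩) := by
  ext w
  simp only [SimpleGraph.mem_neighborFinset, sadj_iff, adj_iff, mem_leaves, ne_eq, Fin.ext_iff,
    Finset.mem_erase, Finset.mem_insert]
  have := w.isLt; have := v.isLt; omega

lemma snf2 (v : Fin (4*k+1)) (h : v.val % 4 = 2) :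
    (switchGraph (pathsPlusIsolated k) (pathLeaves k)).neighborFinset v =
      insert ⟨v.val-1, by omega⟩ ((pathLeaves k).erase ⟨v.val+1, by have := v.isLt; omega⟩) := by
  ext w
  simp only [SimpleGraph.mem_neighborFinset, sadj_iff, adj_iff, mem_leaves, ne_eq, Fin.ext_iff,
    Finset.mem_erase, Finset.mem_insert]
  have := w.isLt; have := v.isLt; omega


lemma deg_eq (v : Fin (4*k+1)) : (pathsPlusIsolated k).degree v =
    if v ∈ pathLeaves k then 1 else if v.val = 4*k then 0 else 2 := by
  have hv := v.isLt
  by_cases hm : v ∈ pathLeaves k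
  · rw [if_pos hm]; rw [mem_leaves] at hm
    rcases hm with ⟨h1, h2 | h2⟩
    · rw [SimpleGraph.degree, nf0 v h2 h1, Finset.card_singleton]
    · rw [SimpleGraph.degree, nf3 v h2, Finset.card_singleton]
  · rw [if_neg hm]; rw [mem_leaves] at hm
    by_cases hi : v.val = 4*k
    · rw [if_pos hi, SimpleGraph.degree, nf_iso v hi, Finset.card_empty]
    · rw [if_neg hi, SimpleGraph.degree, nf12 v (by omega)]
      rw [Finset.card_insert_of_notMem (by simp only [Finset.mem_singleton, Fin.ext_iff]; omega),
        Finset.card_singleton]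

lemma switch_deg (v : Fin (4*k+1)) :
    (switchGraph (pathsPlusIsolated k) (pathLeaves k)).degree v = 2*k := by
  have hv := v.isLt
  by_cases hi : v.val = 4*k
  · rw [SimpleGraph.degree, snf_iso v hi, card_leaves]
  · have h4 : v.val % 4 = 0 ∨ v.val % 4 = 1 ∨ v.val % 4 = 2 ∨ v.val % 4 = 3 := by omega
    rcases h4 with h | h | h | h
    · rw [SimpleGraph.degree, snf0 v h (by omega),
        Finset.card_erase_of_mem (by simp [mem_leaves]; omega), Finset.card_compl, card_leaves]
      simp; omega
    · rw [SimpleGraph.degree, snf1 v h,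
        Finset.card_insert_of_notMem (by simp [mem_leaves, Fin.ext_iff]; omega),
        Finset.card_erase_of_mem (by rw [mem_leaves]; simp; omega), card_leaves]
      omega
    · rw [SimpleGraph.degree, snf2 v h,
        Finset.card_insert_of_notMem (by simp [mem_leaves, Fin.ext_iff]; omega),
        Finset.card_erase_of_mem (by rw [mem_leaves]; simp; omega), card_leaves]
      omega
    · rw [SimpleGraph.degree, snf3 v h,
        Finset.card_erase_of_mem (by simp [mem_leaves]; omega), Finset.card_compl, card_leaves]
      simp; omega


lemma edge_card : (pathsPlusIsolated k).edgeFinset.card = 3*k := by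
  have hsum := SimpleGraph.sum_degrees_eq_twice_card_edges (pathsPlusIsolated k)
  have key : ∀ v : Fin (4*k+1), (pathsPlusIsolated k).degree v
      + ((if v ∈ pathLeaves k then 1 else 0)
        + (if v = (⟨4*k, by omega⟩ : Fin (4*k+1)) then 2 else 0)) = 2 := by
    intro v
    have hv := v.isLt
    have hml := mem_leaves (k := k) v
    rw [deg_eq v]
    by_cases h1 : v ∈ pathLeaves k
    · have h2 : v.val ≠ 4*k := by rw [hml] at h1; omega
      rw [if_pos h1, if_pos h1, if_neg (fun he => h2 (by rw [he]))]
    · rw [if_neg h1, if_neg h1]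
      by_cases h2 : v.val = 4*k
      · rw [if_pos h2, if_pos (Fin.ext h2)]
      · rw [if_neg h2, if_neg (fun he => h2 (by rw [he]))]
  have htot : ∑ v : Fin (4*k+1), ((pathsPlusIsolated k).degree v
      + ((if v ∈ pathLeaves k then 1 else 0)
        + (if v = (⟨4*k, by omega⟩ : Fin (4*k+1)) then 2 else 0))) = ∑ _v : Fin (4*k+1), 2 :=
    Finset.sum_congr rfl fun v _ => key v
  rw [Finset.sum_add_distrib, Finset.sum_add_distrib] at htot
  have e1 : ∑ v : Fin (4*k+1), (if v ∈ pathLeaves k then (1:ℕ) else 0) = 2*k := by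
    rw [Finset.sum_ite_mem, Finset.univ_inter, Finset.sum_const, card_leaves, smul_eq_mul, mul_one]
  have e2 : ∑ v : Fin (4*k+1), (if v = (⟨4*k, by omega⟩ : Fin (4*k+1)) then (2:ℕ) else 0) = 2 := by
    rw [Finset.sum_ite_eq']
    simp
  have e3 : ∑ _v : Fin (4*k+1), (2:ℕ) = (4*k+1) * 2 := by
    rw [Finset.sum_const, Finset.card_univ, Fintype.card_fin, smul_eq_mul]
  rw [e1, e2, e3, hsum] at htot
  omega

def phiAux (k : ℕ) : Fin (4*k+1) → ℤ := fun v => if v ∈ pathLeaves k then -1 else 1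

lemma phi_mem (v : Fin (4*k+1)) (h : v ∈ pathLeaves k) : phiAux k v = -1 := if_pos h

lemma phi_not_mem (v : Fin (4*k+1)) (h : v ∉ pathLeaves k) : phiAux k v = 1 := if_neg h

lemma sum_phi : ∑ j : Fin (4*k+1), (if j ∈ pathLeaves k then (-1:ℤ) else 1) = 1 := by
  have : ∀ j : Fin (4*k+1), (if j ∈ pathLeaves k then (-1:ℤ) else 1)
      = 1 - 2 * (if j ∈ pathLeaves k then (1:ℤ) else 0) := by
    intro j; split_ifs <;> ring
  rw [Finset.sum_congr rfl fun j _ => this j, Finset.sum_sub_distrib, ← Finset.mul_sum,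
    Finset.sum_ite_mem, Finset.univ_inter]
  simp only [Finset.sum_const, card_leaves, Finset.card_univ, Fintype.card_fin, smul_eq_mul,
    mul_one, nsmul_eq_mul]
  push_cast
  ring


lemma sum_phiAux : ∑ j : Fin (4*k+1), phiAux k j = 1 := sum_phi

lemma mulVec_phi : (seidelMatrix (pathsPlusIsolated k)).mulVec (phiAux k) = 0 := by
  funext i
  have hi := i.isLt
  simp only [Matrix.mulVec, dotProduct, Pi.zero_apply]
  have hpoint : ∀ j, seidelMatrix (pathsPlusIsolated k) i j * phiAux k j
      = phiAux k j - (if j = i then phiAux k j else 0)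
        - (if (pathsPlusIsolated k).Adj i j then 2 * phiAux k j else 0) := by
    intro j
    simp only [seidelMatrix, Matrix.of_apply]
    by_cases h1 : i = j
    · subst h1
      rw [if_pos rfl, if_pos rfl, if_neg ((pathsPlusIsolated k).irrefl)]; ring
    · rw [if_neg h1, if_neg (Ne.symm h1)]
      by_cases h2 : (pathsPlusIsolated k).Adj i j
      · rw [if_pos h2, if_pos h2]; ring
      · rw [if_neg h2, if_neg h2]; ring
  rw [Finset.sum_congr rfl fun j _ => hpoint j, Finset.sum_sub_distrib, Finset.sum_sub_distrib,
    sum_phiAux, Finset.sum_ite_eq']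
  simp only [Finset.mem_univ, if_true]
  have hN : ∑ j, (if (pathsPlusIsolated k).Adj i j then 2 * phiAux k j else 0)
      = ∑ j ∈ (pathsPlusIsolated k).neighborFinset i, 2 * phiAux k j := by
    rw [SimpleGraph.neighborFinset_eq_filter, Finset.sum_filter]
  rw [hN]
  by_cases hiso : i.val = 4*k
  · rw [nf_iso i hiso, Finset.sum_empty, phi_not_mem i (by rw [mem_leaves]; omega)]
    ring
  · have h4 : i.val % 4 = 0 ∨ i.val % 4 = 1 ∨ i.val % 4 = 2 ∨ i.val % 4 = 3 := by omega
    rcases h4 with h | h | h | h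
    · rw [nf0 i h (by omega), Finset.sum_singleton,
        phi_mem i (by rw [mem_leaves]; omega),
        phi_not_mem _ (by rw [mem_leaves]; simp; omega)]
      ring
    · rw [nf12 i (by omega), Finset.sum_pair (by simp only [ne_eq, Fin.ext_iff]; omega),
        phi_not_mem i (by rw [mem_leaves]; omega),
        phi_mem (⟨i.val-1, by omega⟩ : Fin (4*k+1)) (by rw [mem_leaves]; simp; omega),
        phi_not_mem (⟨i.val+1, by omega⟩ : Fin (4*k+1)) (by rw [mem_leaves]; simp; omega)]
      ring
    · rw [nf12 i (by omega), Finset.sum_pair (by simp only [ne_eq, Fin.ext_iff]; omega),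
        phi_not_mem i (by rw [mem_leaves]; omega),
        phi_not_mem (⟨i.val-1, by omega⟩ : Fin (4*k+1)) (by rw [mem_leaves]; simp; omega),
        phi_mem (⟨i.val+1, by omega⟩ : Fin (4*k+1)) (by rw [mem_leaves]; simp; omega)]
      ring
    · rw [nf3 i h, Finset.sum_singleton,
        phi_mem i (by rw [mem_leaves]; omega),
        phi_not_mem _ (by rw [mem_leaves]; simp; omega)]
      ring

end Aux

theorem pathsPlusIsolated_switch_regular (k : ℕ) (hk : 1 ≤ k) :
    (pathsPlusIsolated k).edgeFinset.card = 3 * k ∧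
    (pathLeaves k).card = 2 * k ∧
    (∀ v ∈ pathLeaves k, (pathsPlusIsolated k).degree v = 1) ∧
    (∀ v, (switchGraph (pathsPlusIsolated k) (pathLeaves k)).degree v = 2 * k) ∧
    (seidelMatrix (pathsPlusIsolated k)).det = 0 ∧
    ∃ φ : Fin (4 * k + 1) → ℤ, (∀ i, φ i = 1 ∨ φ i = -1) ∧
      (seidelMatrix (pathsPlusIsolated k)).mulVec φ = 0 := by
  refine ⟨edge_card, card_leaves, fun v hv => ?_, switch_deg, ?_, phiAux k, ?_, mulVec_phi⟩
  · rw [deg_eq, if_pos hv]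
  · rw [← Matrix.exists_mulVec_eq_zero_iff]
    refine ⟨phiAux k, ?_, mulVec_phi⟩
    intro h0
    have h1 := congrFun h0 ⟨0, by omega⟩
    rw [phi_mem _ (by rw [mem_leaves]; simp; omega)] at h1
    simp at h1
  · intro j
    unfold phiAux
    split_ifs <;> simp
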